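/- For every n × n 0-1 matrix M, st₀(M) + st₁(M) ≥ ⌈n/2⌉ + n − 1, where st₀(M) and st₁(M) denote the maximum lengths of a 0-staircase and a 1-staircase in M respectively. -/

import Mathlib

/-- A step of a staircase: the next position is strictly to the right in the
same row, or strictly below in the same column. -/
def Step {n N : ℕ} (p q : Fin n × Fin N) : Prop :=
  (p.1 = q.1 ∧ p.2 < q.2) ∨ (p.2 = q.2 ∧ p.1 < q.1)

/-- A `v`-staircase in the 0-1 matrix `M`: a sequence of positions all holding
the value `v`, each successive one strictly to the right in the same row or
strictly below in the same column of the previous one. -/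
def IsStaircase {n N : ℕ} (M : Fin n → Fin N → Fin 2) (v : Fin 2)
    (L : List (Fin n × Fin N)) : Prop :=
  (∀ p ∈ L, M p.1 p.2 = v) ∧ L.Chain' Step

private lemma aux_getLast?_mem {α : Type*} {l : List α} {x : α} (hx : x ∈ l.getLast?) :
    x ∈ l := by
  obtain ⟨h, rfl⟩ := List.mem_getLast?_eq_getLast hx
  exact l.getLast_mem h

private lemma aux_filter_partition {α : Type*} (l : List α) (f : α → Fin 2)
    (v w : Fin 2) (hvw : ∀ x : Fin 2, x = v ∨ x = w) (hne : v ≠ w) :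
    (l.filter (fun a => f a = v)).length + (l.filter (fun a => f a = w)).length
      = l.length := by
  induction l with
  | nil => simp
  | cons a t ih =>
    rcases hvw (f a) with h | h
    · simp [List.filter_cons, h, hne]
      omega
    · simp [List.filter_cons, h, Ne.symm hne]
      omega

private lemma aux_key (m : ℕ) (M : Fin (m+1) → Fin (m+1) → Fin 2) (v w : Fin 2)
    (hvw : ∀ x : Fin 2, x = v ∨ x = w) (hne : v ≠ w)
    (hmaj : (m+2)/2 ≤
      ((List.finRange (m+1)).filter (fun j => M (Fin.last m) j = v)).length) :
    ∃ A B, IsStaircase M v A ∧ IsStaircase M w B ∧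
      (m+2)/2 + m ≤ A.length + B.length := by
  classical
  set F : List (Fin (m+1)) :=
    (List.finRange (m+1)).filter (fun j => M (Fin.last m) j = v) with hFdef
  obtain ⟨b, jt, hcons⟩ : ∃ b t, F = b :: t := by
    cases hF : F with
    | nil =>
      rw [hF] at hmaj
      simp only [List.length_nil] at hmaj
      omega
    | cons b t => exact ⟨b, t, rfl⟩
  -- basic facts about F
  have hFpair : F.Pairwise (· < ·) :=
    (List.pairwise_lt_finRange (m+1)).sublist List.filter_sublist
  have hFval : ∀ j ∈ F, M (Fin.last m) j = v := by
    intro j hj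
    have := List.of_mem_filter (p := fun j => decide (M (Fin.last m) j = v)) hj
    simpa using this
  -- the rows above the last row
  set rows : List (Fin (m+1)) := (List.finRange m).map Fin.castSucc with hrowsdef
  have hrowspair : rows.Pairwise (· < ·) := by
    refine List.Pairwise.map _ ?_ (List.pairwise_lt_finRange m)
    intro a b h
    exact Fin.castSucc_lt_castSucc_iff.mpr h
  have hrowslt : ∀ i ∈ rows, i < Fin.last m := by
    intro i hi
    obtain ⟨i0, _, rfl⟩ := List.mem_map.1 hi
    exact Fin.castSucc_lt_last i0
  have hrowslen : rows.length = m := by simp [hrowsdef]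
  -- the three pieces
  set Cv : List (Fin (m+1) × Fin (m+1)) :=
    (rows.filter (fun i => M i b = v)).map (fun i => (i, b)) with hCvdef
  set Cw : List (Fin (m+1) × Fin (m+1)) :=
    (rows.filter (fun i => M i b = w)).map (fun i => (i, b)) with hCwdef
  set Rv : List (Fin (m+1) × Fin (m+1)) :=
    F.map (fun j => (Fin.last m, j)) with hRvdef
  refine ⟨Cv ++ Rv, Cw, ⟨?_, ?_⟩, ⟨?_, ?_⟩, ?_⟩
  · -- values of Cv ++ Rv
    intro p hp
    rcases List.mem_append.1 hp with hp | hp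
    · obtain ⟨i, hi, rfl⟩ := List.mem_map.1 hp
      have := List.of_mem_filter hi
      simpa using this
    · obtain ⟨j, hj, rfl⟩ := List.mem_map.1 hp
      exact hFval j hj
  · -- chain of Cv ++ Rv
    rw [List.Chain', List.isChain_append]
    refine ⟨?_, ?_, ?_⟩
    · apply List.Pairwise.isChain
      apply List.Pairwise.map
      · intro a c h
        exact Or.inr ⟨rfl, h⟩
      · exact hrowspair.sublist List.filter_sublist
    · apply List.Pairwise.isChain
      apply List.Pairwise.map
      · intro a c h
        exact Or.inl ⟨rfl, h⟩
      · exact hFpair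
    · intro x hx y hy
      have hxmem : x ∈ Cv := aux_getLast?_mem hx
      obtain ⟨i, hi, rfl⟩ := List.mem_map.1 hxmem
      have hy' : y = (Fin.last m, b) := by
        rw [hRvdef, hcons] at hy
        simp at hy
        exact hy.symm
      subst hy'
      exact Or.inr ⟨rfl, hrowslt i (List.mem_of_mem_filter hi)⟩
  · -- values of Cw
    intro p hp
    obtain ⟨i, hi, rfl⟩ := List.mem_map.1 hp
    have := List.of_mem_filter hi
    simpa using this
  · -- chain of Cw
    apply List.Pairwise.isChain
    apply List.Pairwise.map
    · intro a c h
      exact Or.inr ⟨rfl, h⟩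
    · exact hrowspair.sublist List.filter_sublist
  · -- length bound
    have hpart : (rows.filter (fun i => M i b = v)).length
        + (rows.filter (fun i => M i b = w)).length = rows.length := by
      simpa using aux_filter_partition rows (fun i => M i b) v w hvw hne
    have hFlen : (m+2)/2 ≤ F.length := hmaj
    simp only [List.length_append, hCvdef, hCwdef, hRvdef, List.length_map]
    omega

/-- For every n × n 0-1 matrix, st₀(M) + st₁(M) ≥ ⌈n/2⌉ + n − 1. -/
theorem stmt1 (n : ℕ) (M : Fin n → Fin n → Fin 2) :
    ∃ (L0 L1 : List (Fin n × Fin n)),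
      IsStaircase M 0 L0 ∧ IsStaircase M 1 L1 ∧
      (n + 1) / 2 + n - 1 ≤ L0.length + L1.length := by
  cases n with
  | zero =>
    refine ⟨[], [], ⟨?_, ?_⟩, ⟨?_, ?_⟩, ?_⟩ <;> simp [IsStaircase, List.Chain']
  | succ m =>
    have hvw01 : ∀ x : Fin 2, x = 0 ∨ x = 1 := by decide
    have hvw10 : ∀ x : Fin 2, x = 1 ∨ x = 0 := by decide
    have hsum := aux_filter_partition (List.finRange (m+1))
      (fun j => M (Fin.last m) j) 0 1 hvw01 (by decide)
    simp only [List.length_finRange] at hsum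
    by_cases h : (m+2)/2 ≤
        ((List.finRange (m+1)).filter (fun j => M (Fin.last m) j = (0 : Fin 2))).length
    · obtain ⟨A, B, hA, hB, hlen⟩ := aux_key m M 0 1 hvw01 (by decide) h
      exact ⟨A, B, hA, hB, by omega⟩
    · have h1 : (m+2)/2 ≤
          ((List.finRange (m+1)).filter (fun j => M (Fin.last m) j = (1 : Fin 2))).length := by
        omega
      obtain ⟨A, B, hA, hB, hlen⟩ := aux_key m M 1 0 hvw10 (by decide) h1
      exact ⟨B, A, hB, hA, by omega⟩
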